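/- arXiv:1103.3485 — 5 statements merged into one kernel-verified Lean document; each statement's English description precedes it below -/
import Mathlib

section
/- For any irreducible permutation π of {1,…,d}, the permutation r_b(π) obtained by the Rauzy induction move of type 0 is again irreducible. -/
/-- The bottom (type 0) Rauzy move of an irreducible permutation of `{1,…,d}`
is irreducible.  Here `σ` is the permutation defined by the Rauzy rule
(stated 0-indexed: position `d-1` plays the role of `d`). -/
theorem rauzy_bottom_irreducible (d : ℕ) (hd : 2 ≤ d) (π σ : Equiv.Perm (Fin d))
    (hirr : ∀ k : ℕ, 1 ≤ k → k < d → ¬ (∀ i : Fin d, i.val < k → (π i).val < k))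
    (hσ : ∀ j : Fin d, (σ j).val =
      if (π j).val ≤ (π ⟨d - 1, by omega⟩).val then (π j).val
      else if (π j).val < d - 1 then (π j).val + 1
      else (π ⟨d - 1, by omega⟩).val + 1) :
    ∀ k : ℕ, 1 ≤ k → k < d → ¬ (∀ i : Fin d, i.val < k → (σ i).val < k) := by
  intro k hk1 hkd hσk
  set t := π ⟨d - 1, by omega⟩ with ht
  by_cases hcase : k ≤ t.val + 1
  · refine hirr k hk1 hkd (fun i hi => ?_)
    have h1 := hσ i
    have h2 := hσk i hi
    split_ifs at h1 with h3 h4 <;> omega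
  · push_neg at hcase
    set S : Finset (Fin d) := Finset.filter (fun i => i.val < k) Finset.univ with hS
    have hmaps : ∀ i ∈ S, σ i ∈ S := by
      intro i hi
      simp only [hS, Finset.mem_filter, Finset.mem_univ, true_and] at hi ⊢
      exact hσk i hi
    have himg : Finset.image σ S = S := by
      apply Finset.eq_of_subset_of_card_le
      · intro x hx
        obtain ⟨i, hi, rfl⟩ := Finset.mem_image.mp hx
        exact hmaps i hi
      · rw [Finset.card_image_of_injective S σ.injective]
    have htS : t ∈ S := by
      simp only [hS, Finset.mem_filter, Finset.mem_univ, true_and]; omega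
    rw [← himg] at htS
    obtain ⟨j, hj, hσj⟩ := Finset.mem_image.mp htS
    simp only [hS, Finset.mem_filter, Finset.mem_univ, true_and] at hj
    have h1 := hσ j
    rw [hσj] at h1
    split_ifs at h1 with h3 h4
    · have hπj : π j = t := Fin.ext (by omega)
      have hjd : j = ⟨d - 1, by omega⟩ := π.injective (hπj.trans ht)
      have := congrArg Fin.val hjd
      simp only at this
      omega
    · omega
    · omega
end

section
/- Let π₀, π₁ : 𝒜 → {1,…,d} be bijections and define Ω_{α,β} = [π₁(α) ≤ π₁(β)] − [π₀(α) ≤ π₀(β)] (Iverson brackets, values in {−1,0,1}). If B and C are orbits of the permutation π_𝒜 = π₀⁻¹ ∘ π₁ of 𝒜, then Σ_{α ∈ B, β ∈ C} Ω_{α,β} = 0. In other words, the vertical cycles span an isotropic subspace. -/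
/-- Vertical cycles are isotropic: if `B` and `C` are orbits of
`π_𝒜 = π₀⁻¹ ∘ π₁`, then the total intersection number
`Σ_{α∈B, β∈C} Ω_{α,β}` vanishes, where
`Ω_{α,β} = [π₁(α) ≤ π₁(β)] − [π₀(α) ≤ π₀(β)]`. -/
theorem vertical_cycles_isotropic {A : Type*} [Fintype A] [DecidableEq A]
    (d : ℕ) (π₀ π₁ : A ≃ Fin d) (B C : Finset A) (α γ : A)
    (hB : ∀ β, β ∈ B ↔ Equiv.Perm.SameCycle (π₁.trans π₀.symm) α β)
    (hC : ∀ β, β ∈ C ↔ Equiv.Perm.SameCycle (π₁.trans π₀.symm) γ β) :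
    ∑ a ∈ B, ∑ b ∈ C,
      ((if (π₁ a).val ≤ (π₁ b).val then (1 : ℤ) else 0) -
       (if (π₀ a).val ≤ (π₀ b).val then (1 : ℤ) else 0)) = 0 := by
  set σ : Equiv.Perm A := π₁.trans π₀.symm with hσ
  have hBσ : ∀ b, b ∈ B ↔ σ b ∈ B := by
    intro b
    rw [hB, hB, Equiv.Perm.sameCycle_apply_right]
  have hCσ : ∀ b, b ∈ C ↔ σ b ∈ C := by
    intro b
    rw [hC, hC, Equiv.Perm.sameCycle_apply_right]
  have hπ : ∀ a : A, π₀ (σ a) = π₁ a := by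
    intro a
    simp [hσ]
  have key : ∑ a ∈ B, ∑ b ∈ C, (if (π₀ a).val ≤ (π₀ b).val then (1 : ℤ) else 0)
      = ∑ a ∈ B, ∑ b ∈ C, (if (π₁ a).val ≤ (π₁ b).val then (1 : ℤ) else 0) := by
    refine (Finset.sum_equiv σ (fun a => (hBσ a)) ?_).symm
    intro a _
    refine Finset.sum_equiv σ (fun b => (hCσ b)) ?_
    intro b _
    rw [hπ, hπ]
  simp only [Finset.sum_sub_distrib, key, sub_self]
end

section
/- Let π₀, π₁ : 𝒜 → {1,…,d} be bijections such that π_𝒜 = π₀⁻¹ ∘ π₁ is an involution of 𝒜, and let Ω_{α,β} = [π₁(α) ≤ π₁(β)] − [π₀(α) ≤ π₀(β)]. If {α, β} with α ≠ β is a 2-cycle (transposition) of π_𝒜, then setting v_{α,β} = Ω(e_α + e_β) and v_{α,−β} = Ω(e_α − e_β), the symplectic pairing satisfies ω(v_{α,−β}, v_{α,β}) = 2 Ω_{α,β} = ±2; in particular it is nonzero. -/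
open Matrix

/-- For a transposition `{α,β}` of the involution `π_𝒜 = π₀⁻¹ ∘ π₁`, the
symplectic pairing of the cycles `v_{α,−β} = Ω(e_α − e_β)` and
`v_{α,β} = Ω(e_α + e_β)` equals `2·Ω_{α,β} = ±2`; here
`ω(Ωu, Ωv) = uᵀ Ω v`. -/
theorem transposition_pairing {A : Type*} [Fintype A] [DecidableEq A]
    (d : ℕ) (π₀ π₁ : A ≃ Fin d)
    (hinv : ∀ a, π₀.symm (π₁ (π₀.symm (π₁ a))) = a)
    (α β : A) (hne : α ≠ β) (hswap : π₀.symm (π₁ α) = β) :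
    let Ω : Matrix A A ℝ := Matrix.of fun a b =>
      (if (π₁ a).val ≤ (π₁ b).val then 1 else 0) -
      (if (π₀ a).val ≤ (π₀ b).val then 1 else 0)
    let e : A → (A → ℝ) := fun a => Pi.single a 1
    (e α - e β) ⬝ᵥ Ω.mulVec (e α + e β) = 2 * Ω α β ∧ (Ω α β = 1 ∨ Ω α β = -1) := by
  intro Ω e
  have h1 : π₁ α = π₀ β := by rw [← hswap]; simp
  have h2 : π₁ β = π₀ α := by
    have := hinv α
    rw [hswap] at this
    rw [← this]; simp
  have hd0 : π₀ α ≠ π₀ β := fun h => hne (π₀.injective h)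
  have key : (e α - e β) ⬝ᵥ Ω.mulVec (e α + e β) = Ω α α + Ω α β - Ω β α - Ω β β := by
    simp only [e, mulVec, dotProduct, Pi.sub_apply, Pi.add_apply, Pi.single_apply, mul_add, mul_ite, mul_one, mul_zero,
      sub_mul, ite_mul, one_mul, zero_mul, Finset.sum_add_distrib, Finset.sum_sub_distrib,
      Finset.sum_ite_eq', Finset.mem_univ, if_true]
    ring
  have hdiag : ∀ a, Ω a a = 0 := by intro a; simp [Ω]
  have hanti : Ω β α = - Ω α β := by
    simp only [Ω, of_apply]
    rcases lt_or_gt_of_ne hd0 with h | h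
    · have hb : ¬ (π₀ β).val ≤ (π₀ α).val := not_le.2 h
      have hb' : ¬ (π₁ α).val ≤ (π₁ β).val := by rw [h1, h2]; exact hb
      have ha : (π₀ α).val ≤ (π₀ β).val := le_of_lt h
      have ha' : (π₁ β).val ≤ (π₁ α).val := by rw [h1, h2]; exact ha
      simp [ha, hb, ha', hb']
    · have hb : (π₀ β).val ≤ (π₀ α).val := le_of_lt h
      have hb' : (π₁ α).val ≤ (π₁ β).val := by rw [h1, h2]; exact hb
      have ha : ¬ (π₀ α).val ≤ (π₀ β).val := not_le.2 h
      have ha' : ¬ (π₁ β).val ≤ (π₁ α).val := by rw [h1, h2]; exact ha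
      simp [ha, hb, ha', hb']
  constructor
  · rw [key, hdiag, hdiag, hanti]; ring
  · simp only [Ω, of_apply]
    rcases lt_or_gt_of_ne hd0 with h | h
    · right
      have hA : ¬ (π₁ α).val ≤ (π₁ β).val := by rw [h1, h2]; exact not_le.2 h
      simp [hA, le_of_lt h]
    · left
      have hh : (π₁ α).val ≤ (π₁ β).val := by rw [h1, h2]; exact le_of_lt h
      simp [hh, not_le.2 h]
end

section
/- Let π be a self-inverse irreducible permutation of {1,…,d} (π = π⁻¹), with intersection matrix Ω_π defined by (Ω_π)_{i,j} = 1 if i < j and π(i) > π(j), −1 if i > j and π(i) < π(j), 0 otherwise. Let V be the span in ℝ^d of the vectors Ω_π e_B as B ranges over the orbits of π on {1,…,d} (all of size 1 or 2, where e_B = Σ_{i∈B} e_i). Then V is a Lagrangian subspace of the symplectic space H = Ω_π ℝ^d with the form ω(Ω_π u, Ω_π v) = uᵀ Ω_π v; in particular dim V = (rank Ω_π)/2. -/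
open Matrix

/-- The intersection matrix `Ω_π` of a permutation, over `ℝ`. -/
def OmegaR (d : ℕ) (π : Equiv.Perm (Fin d)) : Matrix (Fin d) (Fin d) ℝ :=
  Matrix.of fun i j => if i < j ∧ π j < π i then 1 else if j < i ∧ π i < π j then -1 else 0

namespace SelfInvLagAux

open Module Submodule

variable {d : ℕ} (π : Equiv.Perm (Fin d))

/-- The dot-product bilinear form on `ℝ^d`. -/
noncomputable def Bdot (d : ℕ) : LinearMap.BilinForm ℝ (Fin d → ℝ) :=
  LinearMap.mk₂ ℝ (fun u v => u ⬝ᵥ v)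
    (fun a b c => by simp [add_dotProduct])
    (fun r a b => by simp [smul_dotProduct])
    (fun a b c => by simp [dotProduct_add])
    (fun r a b => by simp [dotProduct_smul])

@[simp] lemma Bdot_apply (u v : Fin d → ℝ) : Bdot d u v = u ⬝ᵥ v := rfl

lemma Bdot_refl : (Bdot d).IsRefl := fun u v h => by
  simpa [Bdot_apply, dotProduct_comm] using h

lemma Bdot_nondeg : (Bdot d).Nondegenerate := ⟨fun u h =>
  dotProduct_self_eq_zero.mp (h u), fun u h => dotProduct_self_eq_zero.mp (h u)⟩

lemma finrank_orth (W : Submodule ℝ (Fin d → ℝ)) :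
    finrank ℝ ((Bdot d).orthogonal W) = d - finrank ℝ W := by
  rw [LinearMap.BilinForm.finrank_orthogonal Bdot_nondeg, Module.finrank_fin_fun]

set_option maxHeartbeats 800000 in
set_option synthInstance.maxHeartbeats 400000 in
lemma finrank_map_of_ker_le (f : (Fin d → ℝ) →ₗ[ℝ] (Fin d → ℝ)) (T : Submodule ℝ (Fin d → ℝ))
    (h : LinearMap.ker f ≤ T) :
    finrank ℝ (T.map f) + finrank ℝ (LinearMap.ker f) = finrank ℝ T := by
  have h1 := LinearMap.finrank_range_add_finrank_ker (f.comp T.subtype)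
  have h2 : finrank ℝ (Submodule.comap T.subtype (LinearMap.ker f))
      = finrank ℝ (LinearMap.ker f) := (Submodule.comapSubtypeEquivOfLe h).finrank_eq
  rw [LinearMap.range_comp, Submodule.range_subtype, LinearMap.ker_comp, h2] at h1
  exact h1

lemma pi_pi (hself : π⁻¹ = π) : ∀ i, π (π i) = i := fun i => by
  have h : π⁻¹ (π i) = π (π i) := by rw [hself]
  rw [← h, Equiv.Perm.inv_def, Equiv.symm_apply_apply]

set_option maxRecDepth 10000 in
lemma skew (i j : Fin d) : OmegaR d π j i = - OmegaR d π i j := by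
  simp only [OmegaR, Matrix.of_apply]
  by_cases hA : j < i ∧ π i < π j <;> by_cases hB : i < j ∧ π j < π i
  · exact absurd hA.1 (lt_asymm hB.1)
  · rw [if_pos hA, if_neg hB, if_pos hA]; all_goals norm_num
  · rw [if_neg hA, if_pos hB, if_pos hB]; all_goals norm_num
  · rw [if_neg hA, if_neg hB, if_neg hB, if_neg hA]; all_goals norm_num

set_option maxRecDepth 10000 in
lemma perm_apply (hself : π⁻¹ = π) (i j : Fin d) :
    OmegaR d π (π i) (π j) = - OmegaR d π i j := by
  simp only [OmegaR, Matrix.of_apply, pi_pi π hself]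
  by_cases hA : j < i ∧ π i < π j <;> by_cases hB : i < j ∧ π j < π i
  · exact absurd hA.1 (lt_asymm hB.1)
  · rw [if_pos (⟨hA.2, hA.1⟩ : _ ∧ _), if_neg hB, if_pos hA]; all_goals norm_num
  · rw [if_neg (fun hc : _ ∧ _ => hA ⟨hc.2, hc.1⟩), if_pos (⟨hB.2, hB.1⟩ : _ ∧ _),
      if_pos hB]; all_goals norm_num
  · rw [if_neg (fun hc : _ ∧ _ => hA ⟨hc.2, hc.1⟩), if_neg (fun hc : _ ∧ _ => hB ⟨hc.2, hc.1⟩),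
      if_neg hB, if_neg hA]; all_goals norm_num

lemma dot_mulVec_skew (u w : Fin d → ℝ) :
    u ⬝ᵥ (OmegaR d π).mulVec w = - ((OmegaR d π).mulVec u ⬝ᵥ w) := by
  have hT : (OmegaR d π)ᵀ = -(OmegaR d π) := by
    ext i j
    rw [Matrix.transpose_apply, Matrix.neg_apply]
    exact skew π i j
  rw [Matrix.dotProduct_mulVec, ← Matrix.mulVec_transpose, hT, Matrix.neg_mulVec,
    neg_dotProduct]

lemma mulVec_comp (hself : π⁻¹ = π) (u : Fin d → ℝ) :
    (OmegaR d π).mulVec (u ∘ π) = (-((OmegaR d π).mulVec u)) ∘ π := by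
  have hππ := pi_pi π hself
  funext i
  have h1 : ∀ j, OmegaR d π i (π j) = -OmegaR d π (π i) j := by
    intro j
    have h := perm_apply π hself i (π j)
    rw [hππ j] at h
    linarith
  show (OmegaR d π).mulVec (u ∘ π) i = -((OmegaR d π).mulVec u (π i))
  simp only [Matrix.mulVec, dotProduct, Function.comp_apply]
  rw [← Equiv.sum_comp π (fun j => OmegaR d π i j * u (π j)), ← Finset.sum_neg_distrib]
  refine Finset.sum_congr rfl fun j _ => ?_
  rw [hππ j, h1 j]
  ring

lemma dot_comp (u v : Fin d → ℝ) : (u ∘ π) ⬝ᵥ (v ∘ π) = u ⬝ᵥ v := by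
  simp only [dotProduct, Function.comp_apply]
  exact Equiv.sum_comp π (fun j => u j * v j)

lemma sameCycle_iff (hself : π⁻¹ = π) (i j : Fin d) : π.SameCycle i j ↔ j = i ∨ j = π i := by
  constructor
  · rintro ⟨n, rfl⟩
    have h2 : π ^ (2 : ℤ) = 1 := by
      rw [zpow_two]
      exact mul_eq_one_iff_eq_inv.mpr hself.symm
    have key : π ^ n = 1 ∨ π ^ n = π := by
      rcases Int.even_or_odd n with ⟨k, hk⟩ | ⟨k, hk⟩
      · left; rw [hk, ← two_mul, _root_.zpow_mul, h2, _root_.one_zpow]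
      · right; rw [hk, _root_.zpow_add, _root_.zpow_mul, h2, _root_.one_zpow, one_mul, _root_.zpow_one]
    rcases key with h | h <;> rw [h] <;> simp
  · rintro (rfl | rfl)
    · exact ⟨0, rfl⟩
    · exact ⟨1, by simp⟩

/-- The common eigenspaces of the permutation action. -/
def fixSub (ε : ℝ) : Submodule ℝ (Fin d → ℝ) where
  carrier := {u | u ∘ π = ε • u}
  zero_mem' := by funext j; simp
  add_mem' := by
    intro a b ha hb
    funext j
    have ha' := congrFun ha j
    have hb' := congrFun hb j
    simp only [Function.comp_apply, Pi.smul_apply, smul_eq_mul, Pi.add_apply] at ha' hb' ⊢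
    rw [ha', hb']; ring
  smul_mem' := by
    intro c a ha
    funext j
    have ha' := congrFun ha j
    simp only [Function.comp_apply, Pi.smul_apply, smul_eq_mul] at ha' ⊢
    rw [ha']; ring

lemma mem_fixSub {ε : ℝ} {u : Fin d → ℝ} : u ∈ fixSub π ε ↔ u ∘ π = ε • u := Iff.rfl

lemma fix_mem_span (hself : π⁻¹ = π) (u : Fin d → ℝ) (hu : u ∘ π = u) :
    u ∈ Submodule.span ℝ
      (Set.range (fun i (j : Fin d) => if π.SameCycle i j then (1 : ℝ) else 0)) := by
  classical
  have hππ := pi_pi π hself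
  have hu' : ∀ j, u (π j) = u j := fun j => congrFun hu j
  have key : u = ∑ i, (if π i = i then u i else u i / 2) •
      (fun j => if π.SameCycle i j then (1 : ℝ) else 0) := by
    funext j
    rw [Finset.sum_apply]
    have hterm : ∀ i : Fin d,
        ((if π i = i then u i else u i / 2) •
          fun j => if π.SameCycle i j then (1 : ℝ) else 0) j
        = if i ∈ ({j, π j} : Finset (Fin d)) then (if π i = i then u i else u i / 2) else 0 := by
      intro i
      by_cases h : π.SameCycle i j
      · have h2 : i ∈ ({j, π j} : Finset (Fin d)) := by
          rcases (sameCycle_iff π hself i j).mp h with rfl | rfl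
          · exact Finset.mem_insert_self _ _
          · simp [hππ]
        simp [h, h2]
      · have h2 : i ∉ ({j, π j} : Finset (Fin d)) := by
          simp only [Finset.mem_insert, Finset.mem_singleton]
          rintro (rfl | rfl)
          · exact h (Equiv.Perm.SameCycle.refl _ _)
          · exact h ((sameCycle_iff π hself _ _).mpr (Or.inr (hππ j).symm))
        simp [h, h2]
    rw [Finset.sum_congr rfl (fun i _ => hterm i), Finset.sum_ite_mem, Finset.univ_inter]
    by_cases hj : π j = j
    · rw [show ({j, π j} : Finset (Fin d)) = {j} by rw [hj]; simp,
        Finset.sum_singleton, if_pos hj]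
    · rw [Finset.sum_pair (fun h => hj h.symm), if_neg hj, hππ j,
        if_neg (fun h => hj h.symm), hu' j]
      ring
  rw [key]
  exact Submodule.sum_mem _ fun i _ => Submodule.smul_mem _ _ (Submodule.subset_span ⟨i, rfl⟩)

theorem main (d : ℕ) (π : Equiv.Perm (Fin d)) (hself : π⁻¹ = π) :
    (∀ x : Fin d → ℝ,
      x ∈ Submodule.span ℝ
        {x | ∃ B : Finset (Fin d), (∃ i : Fin d, ∀ j, j ∈ B ↔ π.SameCycle i j) ∧
          x = (OmegaR d π).mulVec (fun j => if j ∈ B then (1 : ℝ) else 0)} ↔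
      ((∃ u, (OmegaR d π).mulVec u = x) ∧
        ∀ u : Fin d → ℝ, (OmegaR d π).mulVec u ∈ Submodule.span ℝ
          {x | ∃ B : Finset (Fin d), (∃ i : Fin d, ∀ j, j ∈ B ↔ π.SameCycle i j) ∧
            x = (OmegaR d π).mulVec (fun j => if j ∈ B then (1 : ℝ) else 0)} → u ⬝ᵥ x = 0)) ∧
    2 * Module.finrank ℝ (Submodule.span ℝ
        {x | ∃ B : Finset (Fin d), (∃ i : Fin d, ∀ j, j ∈ B ↔ π.SameCycle i j) ∧
          x = (OmegaR d π).mulVec (fun j => if j ∈ B then (1 : ℝ) else 0)}) =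
      (OmegaR d π).rank := by
  classical
  have hππ := pi_pi π hself
  set f := (OmegaR d π).mulVecLin with hfdef
  set χ : Fin d → (Fin d → ℝ) := fun i (j : Fin d) => if π.SameCycle i j then (1 : ℝ) else 0
    with hχ
  set Ep : Submodule ℝ (Fin d → ℝ) := Submodule.span ℝ (Set.range χ) with hEp
  set Em : Submodule ℝ (Fin d → ℝ) := fixSub π (-1) with hEm
  set S : Set (Fin d → ℝ) :=
    {x | ∃ B : Finset (Fin d), (∃ i : Fin d, ∀ j, j ∈ B ↔ π.SameCycle i j) ∧
      x = (OmegaR d π).mulVec (fun j => if j ∈ B then (1 : ℝ) else 0)} with hS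
  set V : Submodule ℝ (Fin d → ℝ) := Submodule.span ℝ S with hVdef
  -- generating set is the image of the indicators
  have hset : S = f '' (Set.range χ) := by
    ext x
    constructor
    · rintro ⟨B, ⟨i, hB⟩, rfl⟩
      refine ⟨χ i, ⟨i, rfl⟩, ?_⟩
      have harg : χ i = fun j => if j ∈ B then (1 : ℝ) else 0 := by
        funext j
        show (if π.SameCycle i j then (1 : ℝ) else 0) = _
        simp [hB j]
      show (OmegaR d π).mulVec (χ i) = _
      rw [harg]
    · rintro ⟨w, ⟨i, rfl⟩, rfl⟩
      refine ⟨Finset.univ.filter (π.SameCycle i), ⟨i, fun j => by simp⟩, ?_⟩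
      have harg : χ i = fun j => if j ∈ Finset.univ.filter (π.SameCycle i) then (1 : ℝ) else 0 := by
        funext j
        show (if π.SameCycle i j then (1 : ℝ) else 0) = _
        simp
      show (OmegaR d π).mulVec (χ i) = _
      rw [harg]
  have hV : V = Ep.map f := by
    rw [hVdef, hset, hEp, Submodule.map_span]
  -- V is inside the range of f
  have hVr : V ≤ LinearMap.range f := by
    rw [hV]
    rintro x ⟨w, _, rfl⟩
    exact ⟨w, rfl⟩
  have hEmr : Em.map f ≤ LinearMap.range f := by
    rintro x ⟨w, _, rfl⟩
    exact ⟨w, rfl⟩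
  -- kernel is orthogonal to everything in the range
  have hkerle : ∀ W : Submodule ℝ (Fin d → ℝ), W ≤ LinearMap.range f →
      LinearMap.ker f ≤ (Bdot d).orthogonal W := by
    intro W hW u hu v hv
    obtain ⟨w, rfl⟩ := hW hv
    show f w ⬝ᵥ u = 0
    have h0 : (OmegaR d π).mulVec u = 0 := hu
    have h1 := dot_mulVec_skew π w u
    rw [h0] at h1
    simp only [dotProduct_zero] at h1
    have : (OmegaR d π).mulVec w ⬝ᵥ u = 0 := by linarith
    exact this
  -- isotropy
  have hisoP : ∀ u v : Fin d → ℝ, u ∘ π = u → v ∘ π = v →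
      u ⬝ᵥ (OmegaR d π).mulVec v = 0 := by
    intro u v hu hv
    have hc := mulVec_comp π hself v
    rw [hv] at hc
    have h1 : ((OmegaR d π).mulVec v) ∘ π = -((OmegaR d π).mulVec v) := by
      funext j
      have h2 := congrFun hc j
      simp only [Pi.neg_apply, Function.comp_apply] at h2 ⊢
      linarith
    have h3 := dot_comp π u ((OmegaR d π).mulVec v)
    rw [hu, h1, dotProduct_neg] at h3
    linarith
  have hisoM : ∀ u v : Fin d → ℝ, u ∘ π = -u → v ∘ π = -v →
      u ⬝ᵥ (OmegaR d π).mulVec v = 0 := by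
    intro u v hu hv
    have hc := mulVec_comp π hself v
    rw [hv, Matrix.mulVec_neg] at hc
    have h1 : ((OmegaR d π).mulVec v) ∘ π = (OmegaR d π).mulVec v := by
      funext j
      have h2 := congrFun hc j
      simp only [Pi.neg_apply, Function.comp_apply] at h2 ⊢
      linarith
    have h3 := dot_comp π u ((OmegaR d π).mulVec v)
    rw [hu, h1, neg_dotProduct] at h3
    linarith
  -- fixedness on the two pieces
  have hEpFix : ∀ u ∈ Ep, u ∘ π = u := by
    intro u hu
    have hle : Ep ≤ fixSub π 1 := by
      rw [hEp]
      apply Submodule.span_le.mpr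
      rintro x ⟨i, rfl⟩
      show χ i ∘ π = (1 : ℝ) • χ i
      rw [one_smul]
      funext j
      simp only [hχ, Function.comp_apply]
      congr 1
      simp [Equiv.Perm.sameCycle_apply_right]
    have := hle hu
    rw [mem_fixSub, one_smul] at this
    exact this
  have hEmFix : ∀ u ∈ Em, u ∘ π = -u := by
    intro u hu
    rw [hEm, mem_fixSub] at hu
    rw [hu]
    funext j; simp
  -- Ep is orthogonal to V, Em to its image
  have hEpOrth : Ep ≤ (Bdot d).orthogonal V := by
    intro u hu v hv
    rw [hV] at hv
    obtain ⟨w, hw, rfl⟩ := hv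
    show f w ⬝ᵥ u = 0
    have h1 := dot_mulVec_skew π w u
    have h2 := hisoP w u (hEpFix w hw) (hEpFix u hu)
    have : (OmegaR d π).mulVec w ⬝ᵥ u = 0 := by linarith
    exact this
  have hEmOrth : Em ≤ (Bdot d).orthogonal (Em.map f) := by
    intro u hu v hv
    obtain ⟨w, hw, rfl⟩ := hv
    show f w ⬝ᵥ u = 0
    have h1 := dot_mulVec_skew π w u
    have h2 := hisoM w u (hEmFix w hw) (hEmFix u hu)
    have : (OmegaR d π).mulVec w ⬝ᵥ u = 0 := by linarith
    exact this
  have hVle : V ≤ ((Bdot d).orthogonal V).map f := by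
    have h : Ep.map f ≤ ((Bdot d).orthogonal V).map f := Submodule.map_mono hEpOrth
    exact le_trans (le_of_eq hV) h
  have hWmle : Em.map f ≤ ((Bdot d).orthogonal (Em.map f)).map f := by
    have h : Em.map f ≤ ((Bdot d).orthogonal (Em.map f)).map f := Submodule.map_mono hEmOrth
    exact h
  -- decomposition of the range
  have hsup : LinearMap.range f ≤ V ⊔ Em.map f := by
    rintro x ⟨u, rfl⟩
    have hplus : ((1 : ℝ)/2) • (u + u ∘ π) ∈ Ep := by
      apply Submodule.smul_mem
      rw [hEp, hχ]
      apply fix_mem_span π hself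
      funext j
      simp only [Function.comp_apply, Pi.add_apply]
      rw [hππ j]
      ring
    have hminus : ((1 : ℝ)/2) • (u - u ∘ π) ∈ Em := by
      rw [hEm, mem_fixSub]
      funext j
      simp only [Function.comp_apply, Pi.smul_apply, Pi.sub_apply, smul_eq_mul, Pi.neg_apply,
        neg_smul, one_smul]
      rw [hππ j]
      ring
    have hx : u = ((1 : ℝ)/2) • (u + u ∘ π) + ((1 : ℝ)/2) • (u - u ∘ π) := by
      funext j
      simp only [Pi.add_apply, Pi.smul_apply, Pi.sub_apply, Function.comp_apply, smul_eq_mul]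
      ring
    rw [hx]
    have hadd : f (((1 : ℝ)/2) • (u + u ∘ π) + ((1 : ℝ)/2) • (u - u ∘ π))
        = f (((1 : ℝ)/2) • (u + u ∘ π)) + f (((1 : ℝ)/2) • (u - u ∘ π)) := f.map_add _ _
    rw [hadd]
    exact Submodule.add_mem_sup
      (by rw [hV]; exact Submodule.mem_map_of_mem hplus)
      (Submodule.mem_map_of_mem hminus)
  -- dimension bookkeeping
  have hrd : finrank ℝ (LinearMap.range f) + finrank ℝ (LinearMap.ker f)
      = d := by
    rw [LinearMap.finrank_range_add_finrank_ker, Module.finrank_fin_fun]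
  have e1 := finrank_map_of_ker_le f ((Bdot d).orthogonal V) (hkerle V hVr)
  have e2 := finrank_orth (d := d) V
  have e1' := finrank_map_of_ker_le f ((Bdot d).orthogonal (Em.map f)) (hkerle _ hEmr)
  have e2' := finrank_orth (d := d) (Em.map f)
  have hVd : finrank ℝ V ≤ d := by
    have := Submodule.finrank_le V
    rwa [Module.finrank_fin_fun] at this
  have hWd : finrank ℝ (Em.map f) ≤ d := by
    have := Submodule.finrank_le (Em.map f)
    rwa [Module.finrank_fin_fun] at this
  have m1 : finrank ℝ V ≤ finrank ℝ (((Bdot d).orthogonal V).map f) :=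
    Submodule.finrank_mono hVle
  have m2 : finrank ℝ (Em.map f) ≤ finrank ℝ (((Bdot d).orthogonal (Em.map f)).map f) :=
    Submodule.finrank_mono hWmle
  have m3 : finrank ℝ (LinearMap.range f) ≤ finrank ℝ V + finrank ℝ (Em.map f) := by
    have h4 := Submodule.finrank_mono hsup
    have h5 := Submodule.finrank_sup_add_finrank_inf_eq V (Em.map f)
    omega
  have hrank : (OmegaR d π).rank = finrank ℝ (LinearMap.range f) := rfl
  have h2a : 2 * finrank ℝ V = finrank ℝ (LinearMap.range f) := by omega
  refine ⟨?_, by rw [hrank]; exact h2a⟩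
  -- the Lagrangian characterization
  have heq : ((Bdot d).orthogonal V).map f = V := by
    refine (Submodule.eq_of_le_of_finrank_le hVle ?_).symm
    omega
  intro x
  constructor
  · intro hx
    refine ⟨?_, ?_⟩
    · obtain ⟨u, hu⟩ := hVr hx
      exact ⟨u, hu⟩
    · intro u hu
      rw [← heq] at hx
      obtain ⟨w, hw, rfl⟩ := hx
      have h1 := dot_mulVec_skew π u w
      have h2 : (OmegaR d π).mulVec u ⬝ᵥ w = 0 := hw _ hu
      show u ⬝ᵥ (OmegaR d π).mulVec w = 0
      linarith
  · rintro ⟨⟨u, hu⟩, hall⟩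
    rw [← heq]
    refine ⟨u, ?_, hu⟩
    intro v hv
    obtain ⟨w, hw⟩ := hVr hv
    have h3 : w ⬝ᵥ x = 0 := hall w (by rw [show (OmegaR d π).mulVec w = v from hw]; exact hv)
    show v ⬝ᵥ u = 0
    rw [← hw]
    have h4 := dot_mulVec_skew π w u
    rw [hu] at h4
    show (OmegaR d π).mulVec w ⬝ᵥ u = 0
    linarith

end SelfInvLagAux

/-- If `π` is a self-inverse irreducible permutation, then the span `V` of
the vertical cycles `Ω_π e_B` (over the orbits `B` of `π`) is a Lagrangian
subspace of `H = Ω_π ℝ^d` for the symplectic form `ω(Ωu, Ωv) = uᵀΩv`: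
`V` consists exactly of the `x ∈ H` pairing to zero with all of `V`, and
`dim V = (rank Ω_π)/2`. -/
theorem self_inverse_lagrangian (d : ℕ) (hd : 2 ≤ d) (π : Equiv.Perm (Fin d))
    (hirr : ∀ k : ℕ, 1 ≤ k → k < d → ¬ (∀ i : Fin d, i.val < k → (π i).val < k))
    (hself : π⁻¹ = π) :
    let Ω := OmegaR d π
    let V : Submodule ℝ (Fin d → ℝ) := Submodule.span ℝ
      {x | ∃ B : Finset (Fin d), (∃ i : Fin d, ∀ j, j ∈ B ↔ π.SameCycle i j) ∧
        x = Ω.mulVec (fun j => if j ∈ B then (1 : ℝ) else 0)}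
    (∀ x : Fin d → ℝ,
      x ∈ V ↔ ((∃ u, Ω.mulVec u = x) ∧ ∀ u : Fin d → ℝ, Ω.mulVec u ∈ V → u ⬝ᵥ x = 0)) ∧
    2 * Module.finrank ℝ ↥V = Ω.rank := by
  intro Ω V
  exact SelfInvLagAux.main d π hself
end

section
/- Every self-inverse irreducible permutation π of {1,…,d} has at least (rank Ω_π)/2 transpositions, i.e. at least that many 2-element orbits on {1,…,d}. -/
open Finset

lemma omega_apply (d : ℕ) (π : Equiv.Perm (Fin d)) (i j : Fin d) :
    OmegaR d π i j = (if π j < π i then (1:ℝ) else 0) - (if j < i then (1:ℝ) else 0) := by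
  show (if i < j ∧ π j < π i then (1:ℝ) else if j < i ∧ π i < π j then -1 else 0) = _
  rcases lt_trichotomy i j with h | h | h
  · have h' : ¬ j < i := asymm h
    by_cases h2 : π j < π i <;> simp [h, h', h2]
  · subst h; simp
  · have h' : ¬ i < j := asymm h
    have hne : π j ≠ π i := fun e => absurd (π.injective e) (ne_of_lt h)
    by_cases h2 : π i < π j
    · simp [h, h', h2, asymm h2]
    · have h3 : π j < π i := lt_of_le_of_ne (not_lt.1 h2) hne
      simp [h, h', h2, h3]

/-- The "partial sums difference" linear map. -/
def phiMap (d : ℕ) (π : Equiv.Perm (Fin d)) : (Fin d → ℝ) →ₗ[ℝ] (Fin d → ℝ) where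
  toFun v i := (∑ j ∈ univ.filter (fun j => j < i), v j)
      - ∑ j ∈ univ.filter (fun j => j < π i), v j
  map_add' u v := by
    funext i
    simp only [Pi.add_apply, Finset.sum_add_distrib]
    ring
  map_smul' c v := by
    funext i
    simp only [Pi.smul_apply, smul_eq_mul, ← Finset.mul_sum, RingHom.id_apply]
    ring

/-- A self-inverse irreducible permutation has at least `(rank Ω_π)/2`
transpositions (2-element orbits). -/
theorem self_inverse_transposition_count (d : ℕ) (hd : 2 ≤ d) (π : Equiv.Perm (Fin d))
    (hirr : ∀ k : ℕ, 1 ≤ k → k < d → ¬ (∀ i : Fin d, i.val < k → (π i).val < k))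
    (hself : π⁻¹ = π) :
    (OmegaR d π).rank ≤
      2 * Set.ncard {B : Finset (Fin d) | ∃ i, π i ≠ i ∧ B = {i, π i}} := by
  classical
  have hinv : ∀ i, π (π i) = i := by
    intro i
    nth_rewrite 1 [← hself]
    exact π.symm_apply_apply i
  set N₁ : Finset (Fin d) := univ.filter (fun i => i < π i) with hN₁
  -- counting: the number of transpositions equals `N₁.card`
  have hmemN₁ : ∀ i : Fin d, i ∈ N₁ ↔ i < π i := by
    intro i; simp [hN₁]
  have hT : {B : Finset (Fin d) | ∃ i, π i ≠ i ∧ B = {i, π i}}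
      = ↑(N₁.image (fun i => ({i, π i} : Finset (Fin d)))) := by
    ext B
    simp only [Set.mem_setOf_eq, coe_image, Set.mem_image, mem_coe]
    constructor
    · rintro ⟨i, hne, rfl⟩
      rcases (Ne.symm hne : i ≠ π i).lt_or_gt with h | h
      · exact ⟨i, (hmemN₁ i).2 h, rfl⟩
      · refine ⟨π i, (hmemN₁ (π i)).2 (by rw [hinv]; exact h), ?_⟩
        rw [hinv, Finset.pair_comm]
    · rintro ⟨i, hi, rfl⟩
      exact ⟨i, ne_of_gt ((hmemN₁ i).1 hi), rfl⟩
  have hcard : Set.ncard {B : Finset (Fin d) | ∃ i, π i ≠ i ∧ B = {i, π i}} = N₁.card := by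
    rw [hT, Set.ncard_coe_finset]
    apply Finset.card_image_of_injOn
    intro i hi j hj hij
    simp only [mem_coe] at hi hj
    have hi' := (hmemN₁ i).1 hi
    have hj' := (hmemN₁ j).1 hj
    have hij2 : ({i, π i} : Finset (Fin d)) = {j, π j} := hij
    have h1 : i ∈ ({j, π j} : Finset (Fin d)) := by
      rw [← hij2]; exact Finset.mem_insert_self i {π i}
    rcases Finset.mem_insert.1 h1 with h | h
    · exact h
    · have h2 : i = π j := Finset.mem_singleton.1 h
      have e1 : π i = j := by rw [h2, hinv]
      have hlt1 : i < j := by rw [← e1]; exact hi'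
      have hlt2 : j < i := by rw [h2]; exact hj'
      exact absurd hlt1 (asymm hlt2)
  -- the subspace of "anti-invariant" vectors has dimension at most `N₁.card`
  set U : Submodule ℝ (Fin d → ℝ) :=
    LinearMap.ker (LinearMap.funLeft ℝ ℝ ⇑π + LinearMap.id) with hU
  have memU : ∀ u : Fin d → ℝ, u ∈ U ↔ ∀ i, u (π i) + u i = 0 := by
    intro u
    simp [hU, LinearMap.mem_ker, funext_iff]
  have hUle : Module.finrank ℝ U ≤ N₁.card := by
    have hker : LinearMap.ker
        ((LinearMap.funLeft ℝ ℝ (fun i : {x // x ∈ N₁} => (i : Fin d))).comp U.subtype) = ⊥ := by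
      rw [Submodule.eq_bot_iff]
      rintro ⟨u, hu⟩ h
      rw [LinearMap.mem_ker] at h
      have h0 : ∀ i ∈ N₁, u i = 0 := by
        intro i hi
        have := congrFun h ⟨i, hi⟩
        simpa using this
      have hu' := (memU u).1 hu
      apply Subtype.ext
      funext i
      show u i = 0
      rcases lt_trichotomy i (π i) with hlt | heq | hgt
      · exact h0 i ((hmemN₁ i).2 hlt)
      · have := hu' i
        rw [← heq] at this
        linarith
      · have hπi : π i ∈ N₁ := (hmemN₁ (π i)).2 (by rw [hinv]; exact hgt)
        have h1 : u (π i) = 0 := h0 (π i) hπi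
        have := hu' (π i)
        rw [hinv, h1] at this
        linarith
    have hinj := LinearMap.ker_eq_bot.1 hker
    have := LinearMap.finrank_le_finrank_of_injective hinj
    simpa [Module.finrank_pi, Fintype.card_coe] using this
  -- the two linear maps whose kernels intersect inside `ker Ω`
  set θ₁ : (Fin d → ℝ) →ₗ[ℝ] (Fin d → ℝ) := LinearMap.funLeft ℝ ℝ ⇑π - LinearMap.id with hθ₁
  have hr1 : LinearMap.range θ₁ ≤ U := by
    rintro _ ⟨v, rfl⟩
    rw [memU]
    intro i
    simp only [hθ₁, LinearMap.sub_apply, LinearMap.funLeft_apply, LinearMap.id_apply,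
      Pi.sub_apply, hinv]
    ring
  have hr2 : LinearMap.range (phiMap d π) ≤ U := by
    rintro _ ⟨v, rfl⟩
    rw [memU]
    intro i
    show ((∑ j ∈ univ.filter (fun j => j < π i), v j)
        - ∑ j ∈ univ.filter (fun j => j < π (π i)), v j)
      + ((∑ j ∈ univ.filter (fun j => j < i), v j)
        - ∑ j ∈ univ.filter (fun j => j < π i), v j) = 0
    rw [hinv]
    ring
  have hfinrank_fun : Module.finrank ℝ (Fin d → ℝ) = d := by
    simp [Module.finrank_pi]
  have rank_le : ∀ θ : (Fin d → ℝ) →ₗ[ℝ] (Fin d → ℝ), LinearMap.range θ ≤ U →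
      d ≤ Module.finrank ℝ (LinearMap.ker θ) + N₁.card := by
    intro θ hθ
    have h1 := LinearMap.finrank_range_add_finrank_ker θ
    rw [hfinrank_fun] at h1
    have h2 : Module.finrank ℝ (LinearMap.range θ) ≤ N₁.card :=
      le_trans (Submodule.finrank_mono hθ) hUle
    omega
  -- kernel inclusion
  have hker_incl : LinearMap.ker θ₁ ⊓ LinearMap.ker (phiMap d π)
      ≤ LinearMap.ker (OmegaR d π).mulVecLin := by
    intro v hv
    obtain ⟨hv1, hv2⟩ := Submodule.mem_inf.1 hv
    rw [LinearMap.mem_ker] at hv1 hv2 ⊢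
    have hvπ : ∀ j, v (π j) = v j := by
      intro j
      have := congrFun hv1 j
      simpa [hθ₁, sub_eq_zero] using this
    have hsum : ∀ i', (∑ j ∈ univ.filter (fun j => j < i'), v j)
        = ∑ j ∈ univ.filter (fun j => j < π i'), v j := by
      intro i'
      have := congrFun hv2 i'
      simpa [phiMap, sub_eq_zero] using this
    funext i
    show (OmegaR d π).mulVec v i = 0
    rw [Matrix.mulVec, dotProduct]
    calc ∑ j, OmegaR d π i j * v j
        = ∑ j, ((if π j < π i then v j else 0) - (if j < i then v j else 0)) := by
          apply Finset.sum_congr rfl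
          intro j _
          rw [omega_apply]
          split_ifs <;> ring
      _ = (∑ j, if π j < π i then v j else 0) - (∑ j, if j < i then v j else 0) :=
          Finset.sum_sub_distrib _ _
      _ = (∑ j, if j < π i then v j else 0) - (∑ j, if j < i then v j else 0) := by
          congr 1
          refine Fintype.sum_equiv π _ _ (fun x => ?_)
          by_cases h : π x < π i <;> simp [h, hvπ]
      _ = 0 := by
          have := hsum i
          rw [Finset.sum_filter, Finset.sum_filter] at this
          rw [← this, sub_self]
  -- assemble the dimension count
  have h1 := rank_le θ₁ hr1
  have h2 := rank_le (phiMap d π) hr2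
  have hsupinf := Submodule.finrank_sup_add_finrank_inf_eq
    (LinearMap.ker θ₁) (LinearMap.ker (phiMap d π))
  have hsup_le : Module.finrank ℝ ↥(LinearMap.ker θ₁ ⊔ LinearMap.ker (phiMap d π)) ≤ d := by
    have := Submodule.finrank_le (LinearMap.ker θ₁ ⊔ LinearMap.ker (phiMap d π))
    rwa [hfinrank_fun] at this
  have hnull : Module.finrank ℝ ↥(LinearMap.ker θ₁ ⊓ LinearMap.ker (phiMap d π))
      ≤ Module.finrank ℝ ↥(LinearMap.ker (OmegaR d π).mulVecLin) :=
    Submodule.finrank_mono hker_incl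
  have hrn := LinearMap.finrank_range_add_finrank_ker (OmegaR d π).mulVecLin
  rw [hfinrank_fun] at hrn
  have hrank : (OmegaR d π).rank
      = Module.finrank ℝ (LinearMap.range (OmegaR d π).mulVecLin) := rfl
  rw [hcard, hrank]
  omega
end
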